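/- Let c be a natural number and define f : ℕ → ℕ by f(0) = c and f(l+1) = 7*f(l) + 18*4^l. Then for all l, f(l) ≤ c*7^l + 6*(7^l - 4^l); in particular f(l) ≤ (c+6)*7^l. -/
import Mathlib

/-- The Strassen operation-count recurrence `f(0) = c`, `f(l+1) = 7·f(l) + 18·4^l`
satisfies `f(l) ≤ c·7^l + 6·(7^l - 4^l) ≤ (c+6)·7^l`. -/
theorem strassen_recurrence_bound (c : ℕ) (f : ℕ → ℕ)
    (hf0 : f 0 = c) (hf : ∀ l, f (l + 1) = 7 * f l + 18 * 4 ^ l) :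
    ∀ l, f l ≤ c * 7 ^ l + 6 * (7 ^ l - 4 ^ l) ∧ f l ≤ (c + 6) * 7 ^ l := by
  have key : ∀ l, f l ≤ c * 7 ^ l + 6 * (7 ^ l - 4 ^ l) := by
    intro l
    induction l with
    | zero => simp [hf0]
    | succ n ih =>
      have h47 : 4 ^ n ≤ 7 ^ n := Nat.pow_le_pow_left (by norm_num) n
      have e7 : 7 ^ (n+1) = 7 * 7 ^ n := by ring
      have e4 : 4 ^ (n+1) = 4 * 4 ^ n := by ring
      have step : f (n+1) ≤ 7 * (c * 7 ^ n + 6 * (7 ^ n - 4 ^ n)) + 18 * 4 ^ n := by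
        rw [hf n]; exact Nat.add_le_add_right (Nat.mul_le_mul_left 7 ih) _
      have : 7 * (c * 7 ^ n + 6 * (7 ^ n - 4 ^ n)) + 18 * 4 ^ n
           = c * 7 ^ (n+1) + 6 * (7 ^ (n+1) - 4 ^ (n+1)) := by
        rw [e7, e4]
        have := h47
        zify [h47, Nat.mul_le_mul (by norm_num : (4:ℕ) ≤ 7) h47]
        ring
      omega
  intro l
  refine ⟨key l, (key l).trans ?_⟩
  have : 6 * (7 ^ l - 4 ^ l) ≤ 6 * 7 ^ l := Nat.mul_le_mul_left 6 (Nat.sub_le _ _)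
  nlinarith [this]
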